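/- Consider a PFB instance with r_j = 0 for all jobs j, and let f : ℕ^n → ℝ be an arbitrary function of the completion-time vector (C_1,…,C_n). If there exists a feasible schedule S* with f(C_1(S*),…,C_n(S*)) ≤ f(C_1(S),…,C_n(S)) for every feasible schedule S, then there also exists a feasible permutation schedule Ŝ with f(C_1(Ŝ),…,C_n(Ŝ)) ≤ f(C_1(S),…,C_n(S)) for every feasible schedule S. -/

import Mathlib

lemma sorted_add_le {N : ℕ} (u v : Fin (N + 1) → ℕ) (P : ℕ)
    (h : ∀ j, u j + P ≤ v j) (k : Fin (N + 1)) :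
    u (Tuple.sort u k) + P ≤ v (Tuple.sort v k) := by
  by_contra hlt
  push_neg at hlt
  set t := u (Tuple.sort u k) + P with ht
  have hA : (Finset.Iic k).image (Tuple.sort v) ⊆ Finset.univ.filter (fun x => v x < t) := by
    intro x hx
    simp only [Finset.mem_image, Finset.mem_Iic] at hx
    obtain ⟨j, hj, rfl⟩ := hx
    have := Tuple.monotone_sort v hj
    simp only [Function.comp] at this
    simp only [Finset.mem_filter, Finset.mem_univ, true_and]
    exact lt_of_le_of_lt this hlt
  have hAB : Finset.univ.filter (fun x => v x < t) ⊆
      Finset.univ.filter (fun x => u x + P < t) := by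
    intro x hx
    simp only [Finset.mem_filter, Finset.mem_univ, true_and] at *
    exact lt_of_le_of_lt (h x) hx
  have hB : Finset.univ.filter (fun x => u x + P < t) ⊆
      (Finset.Iio k).image (Tuple.sort u) := by
    intro x hx
    simp only [Finset.mem_filter, Finset.mem_univ, true_and] at hx
    simp only [Finset.mem_image, Finset.mem_Iio]
    refine ⟨(Tuple.sort u)⁻¹ x, ?_, by simp⟩
    by_contra hk
    push_neg at hk
    have := Tuple.monotone_sort u hk
    simp only [Function.comp, Equiv.apply_symm_apply, Equiv.Perm.inv_def] at this
    omega
  have h1 : k.val + 1 ≤ ((Finset.Iic k).image (Tuple.sort v)).card := by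
    rw [Finset.card_image_of_injective _ (Tuple.sort v).injective, Fin.card_Iic]
  have h2 : ((Finset.Iio k).image (Tuple.sort u)).card ≤ k.val := by
    rw [Finset.card_image_of_injective _ (Tuple.sort u).injective, Fin.card_Iio]
  have := (Finset.card_le_card (hA.trans (hAB.trans hB)))
  omega

def Feasible {m n : ℕ} (p b : Fin (m + 1) → ℕ) (r : Fin (n + 1) → ℕ)
    (c : Fin (m + 1) → Fin (n + 1) → ℕ) : Prop :=
  (∀ j, r j + p 0 ≤ c 0 j) ∧
  (∀ (i : Fin m) (j : Fin (n + 1)), c i.castSucc j + p i.succ ≤ c i.succ j) ∧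
  (∀ (i : Fin (m + 1)) (j j' : Fin (n + 1)),
      c i j ≠ c i j' → c i j + p i ≤ c i j' ∨ c i j' + p i ≤ c i j) ∧
  (∀ (i : Fin (m + 1)) (t : ℕ),
      (Finset.univ.filter (fun j => c i j = t)).card ≤ b i)

def OrderedBy {m n : ℕ} (c : Fin (m + 1) → Fin (n + 1) → ℕ)
    (σ : Equiv.Perm (Fin (n + 1))) : Prop :=
  ∀ i : Fin (m + 1), Monotone fun j => c i (σ j)

theorem stmt10 {m n : ℕ} (p b : Fin (m + 1) → ℕ) (r : Fin (n + 1) → ℕ)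
    (hp : ∀ i, 1 ≤ p i) (hb : ∀ i, 1 ≤ b i ∧ b i ≤ n + 1)
    (hr : ∀ j, r j = 0)
    (F : (Fin (n + 1) → ℕ) → ℝ)
    (hopt : ∃ cstar : Fin (m + 1) → Fin (n + 1) → ℕ, Feasible p b r cstar ∧
      ∀ c : Fin (m + 1) → Fin (n + 1) → ℕ, Feasible p b r c →
        F (fun j => cstar (Fin.last m) j) ≤ F (fun j => c (Fin.last m) j)) :
    ∃ chat : Fin (m + 1) → Fin (n + 1) → ℕ,
      Feasible p b r chat ∧ (∃ σ : Equiv.Perm (Fin (n + 1)), OrderedBy chat σ) ∧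
      ∀ c : Fin (m + 1) → Fin (n + 1) → ℕ, Feasible p b r c →
        F (fun j => chat (Fin.last m) j) ≤ F (fun j => c (Fin.last m) j) := by
  obtain ⟨cs, ⟨h1, h2, h3, h4⟩, hmin⟩ := hopt
  set σ : Equiv.Perm (Fin (n + 1)) := Tuple.sort (cs (Fin.last m)) with hσ
  set τ : Fin (m + 1) → Equiv.Perm (Fin (n + 1)) := fun i => Tuple.sort (cs i) with hτ
  refine ⟨fun i j => cs i (τ i (σ⁻¹ j)), ⟨?_, ?_, ?_, ?_⟩, ⟨σ, ?_⟩, ?_⟩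
  · intro j; simpa [hr] using h1 (τ 0 (σ⁻¹ j))
  · intro i j
    exact sorted_add_le (cs i.castSucc) (cs i.succ) (p i.succ) (h2 i) (σ⁻¹ j)
  · intro i j j' hne
    exact h3 i _ _ hne
  · intro i t
    have : (Finset.univ.filter (fun j => cs i (τ i (σ⁻¹ j)) = t)) =
        (Finset.univ.filter (fun j => cs i j = t)).image (fun j => σ ((τ i)⁻¹ j)) := by
      ext x
      simp only [Finset.mem_filter, Finset.mem_univ, true_and, Finset.mem_image]
      constructor
      · intro hx; exact ⟨τ i (σ⁻¹ x), hx, by simp⟩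
      · rintro ⟨y, hy, rfl⟩; simpa using hy
    rw [this, Finset.card_image_of_injective _
      (fun a a' hh => (τ i)⁻¹.injective (σ.injective hh))]
    exact h4 i t
  · intro i a a' hle
    simp only [Equiv.Perm.inv_def, Equiv.symm_apply_apply]
    exact Tuple.monotone_sort (cs i) hle
  · intro c hc
    have hlast : (fun j => cs (Fin.last m) (τ (Fin.last m) (σ⁻¹ j))) =
        fun j => cs (Fin.last m) j := by
      funext j
      simp [hτ, hσ]
    rw [hlast]
    exact hmin c hc
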